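/- Let u₁, u₂, u₃ be jointly Gaussian with mean zero, unit variances, and pairwise covariances E[uᵢuⱼ] = ε mᵢⱼ for i ≠ j. Let f₁, f₂, f₃ : ℝ → ℝ be regular functions with aᵢ = E[fᵢ(u)] and bᵢ = E[u fᵢ(u)] for u ~ N(0,1). Then as ε → 0, E[f₁(u₁)f₂(u₂)f₃(u₃)] = a₁a₂a₃ + ε (a₁ m₂₃ b₂ b₃ + a₂ m₁₃ b₁ b₃ + a₃ m₁₂ b₁ b₂) + O(ε²). -/

import Mathlib

open MeasureTheory ProbabilityTheory Matrix Real

/-- Density of a centered multivariate Gaussian with covariance matrix `Φ`. -/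
noncomputable def gaussianDensityFn {ι : Type*} [Fintype ι] [DecidableEq ι]
    (Φ : Matrix ι ι ℝ) (x : ι → ℝ) : ℝ :=
  (Real.sqrt ((2 * Real.pi) ^ (Fintype.card ι) * Φ.det))⁻¹ *
    Real.exp (-(x ⬝ᵥ (Φ⁻¹ *ᵥ x)) / 2)

/-- Centered multivariate Gaussian measure with covariance matrix `Φ`. -/
noncomputable def gaussianMeasure {ι : Type*} [Fintype ι] [DecidableEq ι]
    (Φ : Matrix ι ι ℝ) : Measure (ι → ℝ) :=
  volume.withDensity fun x => ENNReal.ofReal (gaussianDensityFn Φ x)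

/-- The error function `erf`. -/
noncomputable def erf (x : ℝ) : ℝ :=
  (2 / Real.sqrt Real.pi) * ∫ t in (0 : ℝ)..x, Real.exp (-t ^ 2)
open Filter Asymptotics Topology
open scoped ENNReal NNReal
set_option maxHeartbeats 1000000

lemma exp_taylor2 (t : ℝ) : |Real.exp t - 1 - t| ≤ t ^ 2 * Real.exp |t| := by
  have h0 : (0:ℝ) ≤ Real.exp t - 1 - t := by
    have := Real.add_one_le_exp t; linarith
  rw [abs_of_nonneg h0]
  rcases le_or_gt 0 t with ht | ht
  · rcases le_or_gt t 1 with h1 | h1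
    · have h := Real.abs_exp_sub_one_sub_id_le (x := t) (by rw [abs_of_nonneg ht]; exact h1)
      have h2 : (1:ℝ) ≤ Real.exp |t| := Real.one_le_exp (abs_nonneg t)
      rw [abs_of_nonneg h0] at h
      nlinarith [sq_nonneg t]
    · rw [abs_of_nonneg ht]
      have h4 : (0:ℝ) ≤ Real.exp t * (t ^ 2 - 1) :=
        mul_nonneg (Real.exp_pos t).le (by nlinarith)
      nlinarith [Real.exp_pos t]
  · rcases le_or_gt (-1) t with h1 | h1
    · have h := Real.abs_exp_sub_one_sub_id_le (x := t) (by rw [abs_of_neg ht]; linarith)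
      have h2 : (1:ℝ) ≤ Real.exp |t| := Real.one_le_exp (abs_nonneg t)
      rw [abs_of_nonneg h0] at h
      nlinarith [sq_nonneg t]
    · have h2 : Real.exp t ≤ 1 := Real.exp_le_one_iff.mpr (by linarith)
      have h3 : (1:ℝ) ≤ Real.exp |t| := Real.one_le_exp (abs_nonneg t)
      nlinarith [sq_nonneg t]

lemma integrable_npow_gauss (n : ℕ) {bb : ℝ} (hb : 0 < bb) :
    Integrable (fun t : ℝ => t ^ n * Real.exp (-bb * t ^ 2)) := by
  have := integrable_rpow_mul_exp_neg_mul_sq hb (s := (n : ℝ))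
    (lt_of_lt_of_le neg_one_lt_zero (Nat.cast_nonneg n))
  simpa [Real.rpow_natCast] using this

lemma integrable_poly_gauss (n : ℕ) {bb : ℝ} (hb : 0 < bb) :
    Integrable (fun t : ℝ => (1 + t ^ 2) ^ n * Real.exp (-bb * t ^ 2)) := by
  have h : (fun t : ℝ => (1 + t ^ 2) ^ n * Real.exp (-bb * t ^ 2))
      = fun t : ℝ => ∑ k ∈ Finset.range (n + 1),
        (n.choose k : ℝ) * (t ^ (2 * (n - k)) * Real.exp (-bb * t ^ 2)) := by
    funext t
    rw [add_pow, Finset.sum_mul]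
    refine Finset.sum_congr rfl fun k hk => ?_
    rw [one_pow, ← pow_mul]
    ring
  rw [h]
  exact integrable_finset_sum _ fun k _ =>
    ((integrable_npow_gauss (2 * (n - k)) hb).const_mul _)

lemma tri3 (a b c : ℝ) : |a + b + c| ≤ |a| + |b| + |c| := by
  calc |a + b + c| ≤ |a + b| + |c| := abs_add_le _ _
    _ ≤ |a| + |b| + |c| := by have := abs_add_le a b; linarith

lemma tri3' (a b c : ℝ) : |a + b - c| ≤ |a| + |b| + |c| := by
  have := tri3 a b (-c); simpa [sub_eq_add_neg] using this

lemma tri4' (a b c d : ℝ) : |a + b + c - d| ≤ |a| + |b| + |c| + |d| := by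
  have h1 : |a + b + c - d| ≤ |a + b + c| + |d| := by
    have := abs_add_le (a+b+c) (-d); simpa [sub_eq_add_neg] using this
  have := tri3 a b c; linarith


lemma habs_prod_lem (u v : ℝ) : |u*v| ≤ (u^2+v^2)/2 := by
  rw [abs_mul]
  nlinarith [sq_abs u, sq_abs v, sq_nonneg (|u|-|v|)]

lemma sq_sum_le_lem (α β γ : ℝ) : α^2+β^2+γ^2 ≤ (|α|+|β|+|γ|)^2 := by
  nlinarith [sq_abs α, sq_abs β, sq_abs γ,
    mul_nonneg (abs_nonneg α) (abs_nonneg β), mul_nonneg (abs_nonneg α) (abs_nonneg γ),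
    mul_nonneg (abs_nonneg β) (abs_nonneg γ)]

lemma half_le_sqrt_lem {D : ℝ} (h : 1/2 ≤ D) : 1/2 ≤ Real.sqrt D := by
  have h2 := Real.sqrt_le_sqrt (show (1:ℝ)/4 ≤ D by linarith)
  rwa [show (1/4:ℝ) = (1/2)^2 by norm_num, Real.sqrt_sq (by norm_num)] at h2

lemma poly_bd_lem (K1 K3 K2 s : ℝ) (h1 : 1 ≤ K1) (h2 : 0 ≤ K2) (hs : 0 ≤ s) :
    2*K1 + K3^2*s^2 + K2*s ≤ (2*K1 + K3^2 + K2)*(1+s)^2 := by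
  nlinarith [mul_nonneg (by linarith : (0:ℝ) ≤ K1) hs,
    mul_nonneg (mul_nonneg (by linarith : (0:ℝ) ≤ K1) hs) hs,
    mul_nonneg (sq_nonneg K3) hs, mul_nonneg h2 hs,
    mul_nonneg (mul_nonneg h2 hs) hs, sq_nonneg K3]

lemma key_est (α β γ : ℝ) :
    ∃ δ C : ℝ, 0 < δ ∧ δ ≤ 1 ∧ 0 ≤ C ∧ ∀ ε : ℝ, |ε| ≤ δ →
      ∀ x0 x1 x2 D P q s : ℝ,
      D = 1 - (ε*α)^2 - (ε*β)^2 - (ε*γ)^2 + 2*(ε*α)*(ε*β)*(ε*γ) →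
      P = (1-(ε*γ)^2)*x0^2 + (1-(ε*β)^2)*x1^2 + (1-(ε*α)^2)*x2^2
            + 2*((ε*β)*(ε*γ) - ε*α)*(x0*x1) + 2*((ε*α)*(ε*γ) - ε*β)*(x0*x2)
            + 2*((ε*α)*(ε*β) - ε*γ)*(x1*x2) →
      q = α*(x0*x1) + β*(x0*x2) + γ*(x1*x2) →
      s = x0^2 + x1^2 + x2^2 →
      (1/2 ≤ D ∧
        |(Real.sqrt ((2*π)^3 * D))⁻¹ * Real.exp (-(D⁻¹*P)/2)
          - (Real.sqrt (2*π))⁻¹^3 * Real.exp (-s/2) * (1 + ε*q)|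
          ≤ ε^2 * C * (1+s)^2 * Real.exp (-(3/8)*s)) := by
  obtain ⟨c, hc⟩ : ∃ c : ℝ, c = |α| + |β| + |γ| := ⟨_, rfl⟩
  have hc0 : (0:ℝ) ≤ c := by rw [hc]; positivity
  obtain ⟨K, hK⟩ : ∃ K : ℝ, K = c + 1 := ⟨_, rfl⟩
  have hK1' : (1:ℝ) ≤ K := by rw [hK]; linarith
  have hK0 : (0:ℝ) < K := by linarith
  obtain ⟨K1, hK1⟩ : ∃ K1 : ℝ, K1 = c^2 + 2*c^3 + 1 := ⟨_, rfl⟩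
  have hc2 : (0:ℝ) ≤ c^2 := sq_nonneg c
  have hc3 : (0:ℝ) ≤ c^3 := by positivity
  have hK10 : (1:ℝ) ≤ K1 := by rw [hK1]; linarith
  obtain ⟨K2, hK2⟩ : ∃ K2 : ℝ, K2 = K1 + 2*(K*K1) + 6*K^2 := ⟨_, rfl⟩
  have hKsq : (0:ℝ) < K^2 := by positivity
  have hKK1 : (0:ℝ) ≤ K*K1 := by positivity
  have hK20 : (0:ℝ) ≤ K2 := by rw [hK2]; linarith
  obtain ⟨K3, hK3⟩ : ∃ K3 : ℝ, K3 = K + K2 := ⟨_, rfl⟩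
  have hK30 : (1:ℝ) ≤ K3 := by rw [hK3]; linarith
  have hK1pos : (0:ℝ) < K1 := by linarith
  have hK3pos : (0:ℝ) < K3 := by linarith
  refine ⟨min 1 (min (1/(2*K1)) (1/(8*K3))), 2*K1 + K3^2 + K2, ?_, min_le_left _ _,
    by linarith [sq_nonneg K3], ?_⟩
  · simp only [lt_min_iff]
    exact ⟨one_pos, by positivity, by positivity⟩
  intro ε hε x0 x1 x2 D P q s hD hP hq hs
  have hε1 : |ε| ≤ 1 := hε.trans (min_le_left _ _)
  have hεsq : ε^2 ≤ |ε| := by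
    rw [← sq_abs, sq]
    calc |ε| * |ε| ≤ |ε| * 1 := mul_le_mul_of_nonneg_left hε1 (abs_nonneg ε)
      _ = |ε| := mul_one _
  have hε2K1 : ε^2 * K1 ≤ 1/2 := by
    have h1 : |ε| ≤ 1/(2*K1) := hε.trans ((min_le_right _ _).trans (min_le_left _ _))
    have h2 : ε^2 * K1 ≤ (1/(2*K1)) * K1 :=
      mul_le_mul_of_nonneg_right (hεsq.trans h1) (by linarith)
    have h3 : (1/(2*K1)) * K1 = 1/2 := by field_simp
    linarith
  have hεK3 : |ε| * K3 ≤ 1/8 := by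
    have h1 : |ε| ≤ 1/(8*K3) := hε.trans ((min_le_right _ _).trans (min_le_right _ _))
    have h2 : |ε| * K3 ≤ (1/(8*K3)) * K3 :=
      mul_le_mul_of_nonneg_right h1 (by linarith)
    have h3 : (1/(8*K3)) * K3 = 1/8 := by field_simp
    linarith
  have hs0 : 0 ≤ s := by rw [hs]; positivity
  have hαc : |α| ≤ c := by rw [hc]; linarith [abs_nonneg β, abs_nonneg γ]
  have hβc : |β| ≤ c := by rw [hc]; linarith [abs_nonneg α, abs_nonneg γ]
  have hγc : |γ| ≤ c := by rw [hc]; linarith [abs_nonneg α, abs_nonneg β]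
  have habc : |α*β*γ| ≤ c^3 := by
    rw [abs_mul, abs_mul]
    calc |α| * |β| * |γ| ≤ c*c*c := by
          exact mul_le_mul (mul_le_mul hαc hβc (abs_nonneg β) hc0) hγc (abs_nonneg γ)
            (by positivity)
      _ = c^3 := by ring
  have hD1 : |D - 1| ≤ ε^2 * K1 := by
    have hrw : D - 1 = ε^2 * (2*ε*(α*β*γ) - (α^2+β^2+γ^2)) := by rw [hD]; ring
    rw [hrw, abs_mul, abs_of_nonneg (sq_nonneg ε)]
    refine mul_le_mul_of_nonneg_left ?_ (sq_nonneg ε)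
    have h2 : |2*ε*(α*β*γ)| ≤ 2*c^3 := by
      rw [abs_mul, abs_mul, abs_two]
      calc 2 * |ε| * |α*β*γ| ≤ 2 * 1 * c^3 := by
            apply mul_le_mul (by linarith) habc (abs_nonneg _) (by norm_num)
        _ = 2*c^3 := by ring
    have h3 : α^2+β^2+γ^2 ≤ c^2 := by
      rw [hc]; exact sq_sum_le_lem α β γ
    have h4 : (0:ℝ) ≤ α^2+β^2+γ^2 := by positivity
    rw [abs_sub_le_iff]
    constructor
    · linarith [le_abs_self (2*ε*(α*β*γ)), hK1]
    · linarith [neg_abs_le (2*ε*(α*β*γ)), hK1]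
  have hD_lb : 1/2 ≤ D := by have h := abs_le.mp hD1; linarith [h.1]
  have hD_ub : D ≤ 3/2 := by have h := abs_le.mp hD1; linarith [h.2]
  have hDpos : 0 < D := by linarith
  refine ⟨hD_lb, ?_⟩
  have hDinv_ub : D⁻¹ ≤ 2 := by
    rw [show (2:ℝ) = (1/2)⁻¹ by norm_num]
    exact inv_anti₀ (by norm_num) hD_lb
  have hDinv_pos : 0 < D⁻¹ := inv_pos.mpr hDpos
  have hDinv1 : |D⁻¹ - 1| ≤ 2*(ε^2*K1) := by
    have hrw : D⁻¹ - 1 = (1 - D) * D⁻¹ := by field_simp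
    rw [hrw, abs_mul, abs_of_pos hDinv_pos, abs_sub_comm]
    calc |D - 1| * D⁻¹ ≤ (ε^2*K1) * 2 :=
          mul_le_mul hD1 hDinv_ub hDinv_pos.le (by positivity)
      _ = 2*(ε^2*K1) := by ring
  have habs_prod : ∀ u v : ℝ, |u*v| ≤ (u^2+v^2)/2 := habs_prod_lem
  have hq_bd : |q| ≤ K*s := by
    rw [hq]
    have h0 := tri3 (α*(x0*x1)) (β*(x0*x2)) (γ*(x1*x2))
    have e1 : |α*(x0*x1)| ≤ c*((x0^2+x1^2)/2) := by
      rw [abs_mul]; exact mul_le_mul hαc (habs_prod x0 x1) (abs_nonneg _) hc0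
    have e2 : |β*(x0*x2)| ≤ c*((x0^2+x2^2)/2) := by
      rw [abs_mul]; exact mul_le_mul hβc (habs_prod x0 x2) (abs_nonneg _) hc0
    have e3 : |γ*(x1*x2)| ≤ c*((x1^2+x2^2)/2) := by
      rw [abs_mul]; exact mul_le_mul hγc (habs_prod x1 x2) (abs_nonneg _) hc0
    have hcs : c*(x0^2+x1^2+x2^2) ≤ K*(x0^2+x1^2+x2^2) := by
      apply mul_le_mul_of_nonneg_right (by linarith) (by positivity)
    have heq : c*((x0^2+x1^2)/2)+c*((x0^2+x2^2)/2)+c*((x1^2+x2^2)/2)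
        = c*(x0^2+x1^2+x2^2) := by ring
    rw [hs]
    linarith [heq]
  obtain ⟨r, hr⟩ : ∃ r : ℝ, r = 2*β*γ*(x0*x1) + 2*α*γ*(x0*x2) + 2*α*β*(x1*x2)
      - (γ^2*x0^2 + β^2*x1^2 + α^2*x2^2) := ⟨_, rfl⟩
  have hr_bd : |r| ≤ 6*K^2*s := by
    have h0 : |r| ≤ |2*β*γ*(x0*x1)| + |2*α*γ*(x0*x2)| + |2*α*β*(x1*x2)|
        + |γ^2*x0^2 + β^2*x1^2 + α^2*x2^2| := by
      rw [hr]; exact tri4' _ _ _ _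
    have hcc : ∀ u v : ℝ, |u| ≤ c → |v| ≤ c → |u| * |v| ≤ c^2 := by
      intro u v hu hv
      calc |u| * |v| ≤ c*c := mul_le_mul hu hv (abs_nonneg _) hc0
        _ = c^2 := by ring
    have h1 : |2*β*γ*(x0*x1)| ≤ c^2*(x0^2+x1^2) := by
      rw [abs_mul, abs_mul, abs_mul, abs_two]
      calc 2 * |β| * |γ| * |x0*x1| ≤ 2 * |β| * |γ| * ((x0^2+x1^2)/2) := by
            apply mul_le_mul_of_nonneg_left (habs_prod x0 x1) (by positivity)
        _ = (|β| * |γ|) * (x0^2+x1^2) := by ring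
        _ ≤ c^2*(x0^2+x1^2) :=
            mul_le_mul_of_nonneg_right (hcc β γ hβc hγc) (by positivity)
    have h2 : |2*α*γ*(x0*x2)| ≤ c^2*(x0^2+x2^2) := by
      rw [abs_mul, abs_mul, abs_mul, abs_two]
      calc 2 * |α| * |γ| * |x0*x2| ≤ 2 * |α| * |γ| * ((x0^2+x2^2)/2) := by
            apply mul_le_mul_of_nonneg_left (habs_prod x0 x2) (by positivity)
        _ = (|α| * |γ|) * (x0^2+x2^2) := by ring
        _ ≤ c^2*(x0^2+x2^2) :=
            mul_le_mul_of_nonneg_right (hcc α γ hαc hγc) (by positivity)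
    have h3 : |2*α*β*(x1*x2)| ≤ c^2*(x1^2+x2^2) := by
      rw [abs_mul, abs_mul, abs_mul, abs_two]
      calc 2 * |α| * |β| * |x1*x2| ≤ 2 * |α| * |β| * ((x1^2+x2^2)/2) := by
            apply mul_le_mul_of_nonneg_left (habs_prod x1 x2) (by positivity)
        _ = (|α| * |β|) * (x1^2+x2^2) := by ring
        _ ≤ c^2*(x1^2+x2^2) :=
            mul_le_mul_of_nonneg_right (hcc α β hαc hβc) (by positivity)
    have h4 : |γ^2*x0^2 + β^2*x1^2 + α^2*x2^2| ≤ c^2*s := by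
      rw [abs_of_nonneg (by positivity), hs]
      have e1 : γ^2 ≤ c^2 := by rw [← sq_abs γ]; exact pow_le_pow_left₀ (abs_nonneg γ) hγc 2
      have e2 : β^2 ≤ c^2 := by rw [← sq_abs β]; exact pow_le_pow_left₀ (abs_nonneg β) hβc 2
      have e3 : α^2 ≤ c^2 := by rw [← sq_abs α]; exact pow_le_pow_left₀ (abs_nonneg α) hαc 2
      linarith [mul_le_mul_of_nonneg_right e1 (sq_nonneg x0),
        mul_le_mul_of_nonneg_right e2 (sq_nonneg x1),
        mul_le_mul_of_nonneg_right e3 (sq_nonneg x2)]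
    have hcK2 : c^2*s ≤ K^2*s := by
      apply mul_le_mul_of_nonneg_right _ hs0
      exact pow_le_pow_left₀ hc0 (by linarith) 2
    have hsum : c^2*(x0^2+x1^2) + c^2*(x0^2+x2^2) + c^2*(x1^2+x2^2) = 2*(c^2*s) := by
      rw [hs]; ring
    linarith [mul_nonneg hKsq.le hs0]
  obtain ⟨Δ, hΔdef⟩ : ∃ Δ : ℝ, Δ = (s - D⁻¹*P)/2 := ⟨_, rfl⟩
  have hPs : P = s - 2*ε*q + ε^2*r := by rw [hP, hq, hr, hs]; ring
  have hs' : |Δ - ε*q| ≤ ε^2*K2*s := by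
    have hΔq : Δ - ε*q = s*(1-D⁻¹)/2 + ε*q*(D⁻¹-1) - ε^2*(D⁻¹*r)/2 := by
      rw [hΔdef, hPs]; ring
    rw [hΔq]
    have h0 := tri3' (s*(1-D⁻¹)/2) (ε*q*(D⁻¹-1)) (ε^2*(D⁻¹*r)/2)
    have h1 : |s*(1-D⁻¹)/2| ≤ ε^2*K1*s := by
      rw [abs_div, abs_mul, abs_of_nonneg hs0, abs_sub_comm, abs_two]
      have e1 : s * |D⁻¹-1| ≤ s * (2*(ε^2*K1)) := mul_le_mul_of_nonneg_left hDinv1 hs0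
      linarith
    have h2 : |ε*q*(D⁻¹-1)| ≤ ε^2*(2*K*K1)*s := by
      rw [abs_mul, abs_mul]
      have e1 : |ε| * |q| * |D⁻¹ - 1| ≤ 1 * (K*s) * (2*(ε^2*K1)) := by
        apply mul_le_mul (mul_le_mul hε1 hq_bd (abs_nonneg _) one_pos.le) hDinv1
          (abs_nonneg _)
        positivity
      have e2 : 1 * (K*s) * (2*(ε^2*K1)) = ε^2*(2*K*K1)*s := by ring
      linarith
    have h3 : |ε^2*(D⁻¹*r)/2| ≤ ε^2*(6*K^2)*s := by
      rw [abs_div, abs_mul, abs_mul, abs_of_nonneg (sq_nonneg ε), abs_two,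
        abs_of_pos hDinv_pos]
      have e1 : D⁻¹ * |r| ≤ 2 * (6*K^2*s) :=
        mul_le_mul hDinv_ub hr_bd (abs_nonneg _) (by norm_num)
      have e2 : ε^2 * (D⁻¹ * |r|) ≤ ε^2 * (2*(6*K^2*s)) :=
        mul_le_mul_of_nonneg_left e1 (sq_nonneg ε)
      linarith
    have e3 : ε^2*K1*s + ε^2*(2*K*K1)*s + ε^2*(6*K^2)*s = ε^2*K2*s := by rw [hK2]; ring
    linarith
  -- remaining part
  have hεqbd : |ε*q| ≤ |ε| * (K*s) := by
    rw [abs_mul]; exact mul_le_mul_of_nonneg_left hq_bd (abs_nonneg ε)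
  have hΔ_bd : |Δ| ≤ |ε| * K3 * s := by
    have h0 : Δ = (Δ - ε*q) + ε*q := by ring
    rw [h0]
    have h1 := abs_add_le (Δ - ε*q) (ε*q)
    have h2 : ε^2*K2*s ≤ |ε| * K2 * s :=
      mul_le_mul_of_nonneg_right (mul_le_mul_of_nonneg_right hεsq hK20) hs0
    have h3 : |ε| * K2 * s + |ε| * (K*s) = |ε| * K3 * s := by rw [hK3]; ring
    linarith
  have hΔ8 : |Δ| ≤ s/8 := by
    have h1 : |ε| * K3 * s ≤ (1/8)*s := mul_le_mul_of_nonneg_right hεK3 hs0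
    linarith
  have hexpΔ_le : Real.exp Δ ≤ Real.exp (s/8) :=
    Real.exp_le_exp.mpr ((le_abs_self Δ).trans hΔ8)
  have hexpabsΔ : Real.exp |Δ| ≤ Real.exp (s/8) := Real.exp_le_exp.mpr hΔ8
  have hexp8_ge1 : (1:ℝ) ≤ Real.exp (s/8) := Real.one_le_exp (by linarith)
  have he2 : |Real.exp Δ - 1 - Δ| ≤ ε^2*K3^2*s^2 * Real.exp (s/8) := by
    have h0 := exp_taylor2 Δ
    have h1 : Δ^2 ≤ ε^2*K3^2*s^2 := by
      have := pow_le_pow_left₀ (abs_nonneg Δ) hΔ_bd 2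
      rw [sq_abs] at this
      calc Δ^2 ≤ (|ε| * K3 * s)^2 := this
        _ = ε^2*K3^2*s^2 := by rw [mul_pow, mul_pow, sq_abs]
    calc |Real.exp Δ - 1 - Δ| ≤ Δ^2 * Real.exp |Δ| := h0
      _ ≤ (ε^2*K3^2*s^2) * Real.exp (s/8) :=
          mul_le_mul h1 hexpabsΔ (Real.exp_pos _).le (by positivity)
  -- sqrt D bounds
  have hsqD_sq : Real.sqrt D ^ 2 = D := Real.sq_sqrt hDpos.le
  have hsqD_nonneg : 0 ≤ Real.sqrt D := Real.sqrt_nonneg D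
  have hsqD_lb : 1/2 ≤ Real.sqrt D := half_le_sqrt_lem hD_lb
  have hsqD_pos : 0 < Real.sqrt D := by linarith
  have hsqDinv_pos : 0 < (Real.sqrt D)⁻¹ := inv_pos.mpr hsqD_pos
  have hsqDinv_ub : (Real.sqrt D)⁻¹ ≤ 2 := by
    rw [show (2:ℝ) = (1/2)⁻¹ by norm_num]
    exact inv_anti₀ (by norm_num) hsqD_lb
  have hu1 : |(Real.sqrt D)⁻¹ - 1| ≤ 2*(ε^2*K1) := by
    have h1 : (Real.sqrt D)⁻¹ - 1 = (1 - Real.sqrt D) * (Real.sqrt D)⁻¹ := by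
      field_simp
    have h2 : (1 - Real.sqrt D) * (1 + Real.sqrt D) = 1 - D := by
      linear_combination -hsqD_sq
    have h3 : |1 - Real.sqrt D| ≤ |1 - D| := by
      have e1 : |1 - Real.sqrt D| * (1 + Real.sqrt D) = |1 - D| := by
        rw [← abs_of_pos (show (0:ℝ) < 1 + Real.sqrt D by linarith), ← abs_mul, h2]
      have e2 : |1 - Real.sqrt D| * 1 ≤ |1 - Real.sqrt D| * (1 + Real.sqrt D) :=
        mul_le_mul_of_nonneg_left (by linarith) (abs_nonneg _)
      linarith [e2.trans_eq e1, (mul_one |1 - Real.sqrt D|).symm.le]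
    have h4 : |1 - D| ≤ ε^2*K1 := by rw [abs_sub_comm]; exact hD1
    rw [h1, abs_mul, abs_of_pos hsqDinv_pos]
    calc |1 - Real.sqrt D| * (Real.sqrt D)⁻¹ ≤ (ε^2*K1) * 2 :=
        mul_le_mul (h3.trans h4) hsqDinv_ub hsqDinv_pos.le (by positivity)
      _ = 2*(ε^2*K1) := by ring
  -- bracket bound
  have hbr : |(Real.sqrt D)⁻¹ * Real.exp Δ - (1 + ε*q)|
      ≤ ε^2 * (2*K1 + K3^2 + K2) * (1+s)^2 * Real.exp (s/8) := by
    have hsplit : (Real.sqrt D)⁻¹ * Real.exp Δ - (1 + ε*q)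
        = ((Real.sqrt D)⁻¹ - 1) * Real.exp Δ + (Real.exp Δ - 1 - Δ) + (Δ - ε*q) := by
      ring
    rw [hsplit]
    have h0 := tri3 (((Real.sqrt D)⁻¹ - 1) * Real.exp Δ) (Real.exp Δ - 1 - Δ) (Δ - ε*q)
    have t1 : |((Real.sqrt D)⁻¹ - 1) * Real.exp Δ| ≤ 2*(ε^2*K1) * Real.exp (s/8) := by
      rw [abs_mul, abs_of_pos (Real.exp_pos Δ)]
      exact mul_le_mul hu1 hexpΔ_le (Real.exp_pos _).le (by positivity)
    have t3 : |Δ - ε*q| ≤ ε^2*K2*s * Real.exp (s/8) := by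
      calc |Δ - ε*q| ≤ ε^2*K2*s := hs'
        _ = ε^2*K2*s * 1 := (mul_one _).symm
        _ ≤ ε^2*K2*s * Real.exp (s/8) := by
            apply mul_le_mul_of_nonneg_left hexp8_ge1 (by positivity)
    have hpoly : 2*K1 + K3^2*s^2 + K2*s ≤ (2*K1 + K3^2 + K2)*(1+s)^2 :=
      poly_bd_lem K1 K3 K2 s hK10 hK20 hs0
    have hsum : 2*(ε^2*K1) * Real.exp (s/8) + ε^2*K3^2*s^2 * Real.exp (s/8)
        + ε^2*K2*s * Real.exp (s/8)
        = ε^2 * (2*K1 + K3^2*s^2 + K2*s) * Real.exp (s/8) := by ring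
    have hfin : ε^2 * (2*K1 + K3^2*s^2 + K2*s) * Real.exp (s/8)
        ≤ ε^2 * ((2*K1 + K3^2 + K2)*(1+s)^2) * Real.exp (s/8) := by
      apply mul_le_mul_of_nonneg_right _ (Real.exp_pos _).le
      exact mul_le_mul_of_nonneg_left hpoly (sq_nonneg ε)
    calc |((Real.sqrt D)⁻¹ - 1) * Real.exp Δ + (Real.exp Δ - 1 - Δ) + (Δ - ε*q)|
          ≤ |((Real.sqrt D)⁻¹ - 1) * Real.exp Δ| + |Real.exp Δ - 1 - Δ| + |Δ - ε*q| :=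
            tri3 _ _ _
      _ ≤ 2*(ε^2*K1) * Real.exp (s/8) + ε^2*K3^2*s^2 * Real.exp (s/8)
          + ε^2*K2*s * Real.exp (s/8) := by linarith [t1, he2, t3]
      _ = ε^2 * (2*K1 + K3^2*s^2 + K2*s) * Real.exp (s/8) := hsum
      _ ≤ ε^2 * ((2*K1 + K3^2 + K2)*(1+s)^2) * Real.exp (s/8) := hfin
      _ = ε^2 * (2*K1 + K3^2 + K2) * (1+s)^2 * Real.exp (s/8) := by ring
  -- final assembly
  have h2π : (0:ℝ) ≤ 2*π := by positivity
  have hsqrtcube : Real.sqrt ((2*π)^3) = Real.sqrt (2*π) ^ 3 := by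
    rw [show (2*π)^3 = (2*π)^2 * (2*π) by ring, Real.sqrt_mul (sq_nonneg _),
      Real.sqrt_sq h2π, pow_succ, Real.sq_sqrt h2π]
  have hsqsplit : (Real.sqrt ((2*π)^3 * D))⁻¹ = (Real.sqrt (2*π))⁻¹^3 * (Real.sqrt D)⁻¹ := by
    rw [Real.sqrt_mul (by positivity), hsqrtcube, mul_inv, inv_pow]
  have hexpsplit : Real.exp (-(D⁻¹*P)/2) = Real.exp (-s/2) * Real.exp Δ := by
    rw [← Real.exp_add]; congr 1; rw [hΔdef]; ring
  have hkeyeq : (Real.sqrt ((2*π)^3 * D))⁻¹ * Real.exp (-(D⁻¹*P)/2)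
      - (Real.sqrt (2*π))⁻¹^3 * Real.exp (-s/2) * (1 + ε*q)
      = (Real.sqrt (2*π))⁻¹^3 * Real.exp (-s/2)
        * ((Real.sqrt D)⁻¹ * Real.exp Δ - (1 + ε*q)) := by
    rw [hsqsplit, hexpsplit]; ring
  have hB0 : (0:ℝ) ≤ (Real.sqrt (2*π))⁻¹^3 := by positivity
  have hB1 : (Real.sqrt (2*π))⁻¹^3 ≤ 1 := by
    apply pow_le_one₀ (by positivity)
    apply inv_le_one_of_one_le₀
    rw [show (1:ℝ) = Real.sqrt 1 by simp]
    apply Real.sqrt_le_sqrt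
    linarith [Real.pi_gt_three]
  rw [hkeyeq, abs_mul, abs_mul, abs_of_nonneg hB0, abs_of_pos (Real.exp_pos _)]
  calc (Real.sqrt (2*π))⁻¹^3 * Real.exp (-s/2)
        * |(Real.sqrt D)⁻¹ * Real.exp Δ - (1 + ε*q)|
      ≤ 1 * Real.exp (-s/2) * (ε^2 * (2*K1 + K3^2 + K2) * (1+s)^2 * Real.exp (s/8)) := by
        apply mul_le_mul _ hbr (abs_nonneg _) (by positivity)
        exact mul_le_mul_of_nonneg_right hB1 (Real.exp_pos _).le
    _ = ε^2 * (2*K1 + K3^2 + K2) * (1+s)^2 * (Real.exp (-s/2) * Real.exp (s/8)) := by ring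
    _ = ε^2 * (2*K1 + K3^2 + K2) * (1+s)^2 * Real.exp (-(3/8)*s) := by
        rw [← Real.exp_add]; congr 2; ring

lemma det3 (p q r : ℝ) :
    (!![1, p, q; p, 1, r; q, r, 1] : Matrix (Fin 3) (Fin 3) ℝ).det
      = 1 - p ^ 2 - q ^ 2 - r ^ 2 + 2 * p * q * r := by
  simp [Matrix.det_fin_three]; ring

lemma quadform3 (p q r : ℝ) (x : Fin 3 → ℝ) :
    x ⬝ᵥ ((!![1, p, q; p, 1, r; q, r, 1] : Matrix (Fin 3) (Fin 3) ℝ)⁻¹ *ᵥ x)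
      = (1 - p ^ 2 - q ^ 2 - r ^ 2 + 2 * p * q * r)⁻¹ *
        ((1 - r ^ 2) * (x 0) ^ 2 + (1 - q ^ 2) * (x 1) ^ 2 + (1 - p ^ 2) * (x 2) ^ 2
          + 2 * (q * r - p) * (x 0 * x 1) + 2 * (p * r - q) * (x 0 * x 2)
          + 2 * (p * q - r) * (x 1 * x 2)) := by
  rw [Matrix.inv_def, Matrix.adjugate_fin_three, det3, Ring.inverse_eq_inv']
  simp [Matrix.mulVec, dotProduct, Fin.sum_univ_three, Matrix.smul_apply]
  ring

lemma cube_bd (t : ℝ) : 1 + |t|^3 ≤ 2*(1+t^2)^2 := by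
  nlinarith [abs_nonneg t, sq_abs t, sq_nonneg (t^2 - |t|), sq_nonneg t]

lemma one_add_sum_le (x0 x1 x2 : ℝ) :
    1 + (x0^2 + x1^2 + x2^2) ≤ (1+x0^2)*(1+x1^2)*(1+x2^2) := by
  nlinarith [mul_nonneg (sq_nonneg x0) (sq_nonneg x1), mul_nonneg (sq_nonneg x0) (sq_nonneg x2),
    mul_nonneg (sq_nonneg x1) (sq_nonneg x2),
    mul_nonneg (mul_nonneg (sq_nonneg x0) (sq_nonneg x1)) (sq_nonneg x2)]

lemma measurable_gdf (Φ : Matrix (Fin 3) (Fin 3) ℝ) : Measurable (gaussianDensityFn Φ) := by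
  unfold gaussianDensityFn
  apply Measurable.const_mul
  apply Real.measurable_exp.comp
  apply Measurable.div _ measurable_const
  apply Measurable.neg
  simp only [dotProduct, Matrix.mulVec]
  exact Finset.measurable_sum _ fun i _ => (measurable_pi_apply i).mul
    (Finset.measurable_sum _ fun j _ => (measurable_const.mul (measurable_pi_apply j)))

theorem stmt2 (m : Fin 3 → Fin 3 → ℝ) (hsymm : ∀ i j, m i j = m j i)
    (f : Fin 3 → ℝ → ℝ)
    (hmeas : ∀ i, Measurable (f i))
    (hgrow : ∃ Cg : ℝ, ∀ i x, |f i x| ≤ Cg * (1 + |x| ^ 3))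
    (a b : Fin 3 → ℝ)
    (ha : ∀ i, a i = ∫ x, f i x ∂ gaussianReal 0 1)
    (hb : ∀ i, b i = ∫ x, x * f i x ∂ gaussianReal 0 1)
    (M : ℝ → Matrix (Fin 3) (Fin 3) ℝ)
    (hM : ∀ ε i j, M ε i j = if i = j then 1 else ε * m i j)
    (ε₀ : ℝ) (hε₀ : 0 < ε₀)
    (hMpos : ∀ ε, |ε| < ε₀ → (M ε).PosDef) :
    (fun ε =>
        (∫ z : Fin 3 → ℝ, f 0 (z 0) * f 1 (z 1) * f 2 (z 2) ∂ gaussianMeasure (M ε))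
          - a 0 * a 1 * a 2
          - ε * (a 0 * m 1 2 * b 1 * b 2 + a 1 * m 0 2 * b 0 * b 2
              + a 2 * m 0 1 * b 0 * b 1))
      =O[𝓝 0] fun ε => ε ^ 2 := by
  obtain ⟨Cg, hCg⟩ := hgrow
  obtain ⟨δ, C, hδ0, hδ1, hC0, hkey⟩ := key_est (m 0 1) (m 0 2) (m 1 2)
  -- notation
  set α := m 0 1 with hα
  set β := m 0 2 with hβ
  set γ := m 1 2 with hγ
  set φ : ℝ → ℝ := fun t => (Real.sqrt (2*π))⁻¹ * Real.exp (-t^2/2) with hφ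
  have hφ_cont : Continuous φ := by fun_prop
  have hφ_nonneg : ∀ t, 0 ≤ φ t := fun t => by positivity
  have hφ_pdf : gaussianPDFReal 0 1 = φ := by
    funext t
    simp [gaussianPDFReal, hφ]
  -- 1-d gaussian integrals
  have hgauss_int : ∀ g : ℝ → ℝ, ∫ x, g x ∂(gaussianReal 0 1) = ∫ x, φ x * g x := by
    intro g
    rw [gaussianReal_of_var_ne_zero 0 one_ne_zero]
    have hrfl : (gaussianPDF 0 1) = (fun x => ((fun y => (gaussianPDFReal 0 1 y).toNNReal) x
        : ℝ≥0∞)) := rfl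
    rw [hrfl, integral_withDensity_eq_integral_smul
      ((measurable_gaussianPDFReal 0 1).real_toNNReal) g]
    congr 1
    funext x
    rw [NNReal.smul_def, Real.coe_toNNReal _ (gaussianPDFReal_nonneg 0 1 x), hφ_pdf,
      smul_eq_mul]
  -- growth
  set Cg' : ℝ := 2*(|Cg|+1) with hCg'
  have hCg'0 : 0 < Cg' := by positivity
  have hfb : ∀ i t, |f i t| ≤ Cg' * (1+t^2)^2 := by
    intro i t
    have h1 := hCg i t
    have h2 : Cg * (1+|t|^3) ≤ |Cg| * (1+|t|^3) := by
      apply mul_le_mul_of_nonneg_right (le_abs_self Cg) (by positivity)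
    have h3 : |Cg| * (1+|t|^3) ≤ |Cg| * (2*(1+t^2)^2) :=
      mul_le_mul_of_nonneg_left (cube_bd t) (abs_nonneg Cg)
    have h4 : |Cg| * (2*(1+t^2)^2) ≤ Cg' * (1+t^2)^2 := by
      rw [hCg']
      have : (0:ℝ) ≤ (1+t^2)^2 := by positivity
      nlinarith [abs_nonneg Cg]
    linarith
  -- per-coordinate functions
  set ψ : ℝ → ℝ := fun t => (1+t^2)^4 * Real.exp (-(3/8)*t^2) with hψ
  have hψ_nonneg : ∀ t, 0 ≤ ψ t := fun t => by positivity
  have hψ_int : Integrable ψ := integrable_poly_gauss 4 (by norm_num)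
  set g0 : Fin 3 → ℝ → ℝ := fun i t => f i t * φ t with hg0
  set g1 : Fin 3 → ℝ → ℝ := fun i t => t * (f i t * φ t) with hg1
  have hφψ : ∀ t : ℝ, φ t ≤ Real.exp (-(3/8)*t^2) := by
    intro t
    rw [hφ]
    have h1 : Real.exp (-t^2/2) ≤ Real.exp (-(3/8)*t^2) := by
      apply Real.exp_le_exp.mpr; nlinarith [sq_nonneg t]
    have h2 : (Real.sqrt (2*π))⁻¹ ≤ 1 := by
      apply inv_le_one_of_one_le₀
      rw [show (1:ℝ) = Real.sqrt 1 by simp]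
      apply Real.sqrt_le_sqrt
      linarith [Real.pi_gt_three]
    calc (Real.sqrt (2*π))⁻¹ * Real.exp (-t^2/2) ≤ 1 * Real.exp (-(3/8)*t^2) :=
        mul_le_mul h2 h1 (Real.exp_pos _).le one_pos.le
      _ = Real.exp (-(3/8)*t^2) := one_mul _
  have hg0_bd : ∀ i t, |g0 i t| ≤ Cg' * ψ t := by
    intro i t
    rw [hg0]
    simp only
    rw [abs_mul, abs_of_nonneg (hφ_nonneg t)]
    calc |f i t| * φ t ≤ (Cg' * (1+t^2)^2) * Real.exp (-(3/8)*t^2) :=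
        mul_le_mul (hfb i t) (hφψ t) (hφ_nonneg t) (by positivity)
      _ = Cg' * ((1+t^2)^2 * Real.exp (-(3/8)*t^2)) := by ring
      _ ≤ Cg' * ((1+t^2)^4 * Real.exp (-(3/8)*t^2)) := by
          apply mul_le_mul_of_nonneg_left _ hCg'0.le
          apply mul_le_mul_of_nonneg_right _ (Real.exp_pos _).le
          apply pow_le_pow_right₀ (by nlinarith [sq_nonneg t]) (by norm_num)
      _ = Cg' * ψ t := rfl
  have hg1_bd : ∀ i t, |g1 i t| ≤ Cg' * ψ t := by
    intro i t
    rw [hg1]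
    simp only
    rw [abs_mul, abs_mul, abs_of_nonneg (hφ_nonneg t)]
    have h1 : |t| * (|f i t| * φ t) ≤ (1+t^2) * ((Cg' * (1+t^2)^2) * Real.exp (-(3/8)*t^2)) := by
      apply mul_le_mul (by nlinarith [sq_abs t, sq_nonneg (|t| - 1)])
        (mul_le_mul (hfb i t) (hφψ t) (hφ_nonneg t) (by positivity))
        (by positivity) (by nlinarith [sq_nonneg t])
    calc |t| * (|f i t| * φ t) ≤ (1+t^2) * ((Cg' * (1+t^2)^2) * Real.exp (-(3/8)*t^2)) := h1
      _ = Cg' * ((1+t^2)^3 * Real.exp (-(3/8)*t^2)) := by ring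
      _ ≤ Cg' * ((1+t^2)^4 * Real.exp (-(3/8)*t^2)) := by
          apply mul_le_mul_of_nonneg_left _ hCg'0.le
          apply mul_le_mul_of_nonneg_right _ (Real.exp_pos _).le
          apply pow_le_pow_right₀ (by nlinarith [sq_nonneg t]) (by norm_num)
      _ = Cg' * ψ t := rfl
  have hg0_meas : ∀ i, AEStronglyMeasurable (g0 i) volume := fun i =>
    ((hmeas i).mul hφ_cont.measurable).aestronglyMeasurable
  have hg1_meas : ∀ i, AEStronglyMeasurable (g1 i) volume := fun i =>
    (measurable_id.mul ((hmeas i).mul hφ_cont.measurable)).aestronglyMeasurable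
  have hg0_int : ∀ i, Integrable (g0 i) := by
    intro i
    apply Integrable.mono' (hψ_int.const_mul Cg') (hg0_meas i)
    exact Filter.Eventually.of_forall fun t => by
      rw [Real.norm_eq_abs]; exact hg0_bd i t
  have hg1_int : ∀ i, Integrable (g1 i) := by
    intro i
    apply Integrable.mono' (hψ_int.const_mul Cg') (hg1_meas i)
    exact Filter.Eventually.of_forall fun t => by
      rw [Real.norm_eq_abs]; exact hg1_bd i t
  -- values of 1-d integrals
  have hg0_val : ∀ i, ∫ t, g0 i t = a i := by
    intro i
    rw [ha i, hgauss_int]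
    congr 1; funext t; rw [hg0]; simp only; ring
  have hg1_val : ∀ i, ∫ t, g1 i t = b i := by
    intro i
    rw [hb i, hgauss_int]
    congr 1; funext t; rw [hg1]; simp only; ring
  -- matrix facts
  have hMεmat : ∀ ε : ℝ, M ε = !![1, ε*(m 0 1), ε*(m 0 2);
      ε*(m 0 1), 1, ε*(m 1 2); ε*(m 0 2), ε*(m 1 2), 1] := by
    intro ε
    ext i j
    fin_cases i <;> fin_cases j <;>
      simp [hM, hsymm 1 0, hsymm 2 0, hsymm 2 1]
  have hdens : ∀ ε : ℝ, ∀ x : Fin 3 → ℝ,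
      gaussianDensityFn (M ε) x
        = (Real.sqrt ((2*π)^3 * (1 - (ε*(m 0 1))^2 - (ε*(m 0 2))^2 - (ε*(m 1 2))^2
            + 2*(ε*(m 0 1))*(ε*(m 0 2))*(ε*(m 1 2)))))⁻¹
          * Real.exp (-((1 - (ε*(m 0 1))^2 - (ε*(m 0 2))^2 - (ε*(m 1 2))^2
            + 2*(ε*(m 0 1))*(ε*(m 0 2))*(ε*(m 1 2)))⁻¹
            * ((1-(ε*(m 1 2))^2)*(x 0)^2 + (1-(ε*(m 0 2))^2)*(x 1)^2
              + (1-(ε*(m 0 1))^2)*(x 2)^2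
              + 2*((ε*(m 0 2))*(ε*(m 1 2)) - ε*(m 0 1))*(x 0 * x 1)
              + 2*((ε*(m 0 1))*(ε*(m 1 2)) - ε*(m 0 2))*(x 0 * x 2)
              + 2*((ε*(m 0 1))*(ε*(m 0 2)) - ε*(m 1 2))*(x 1 * x 2)))/2) := by
    intro ε x
    rw [gaussianDensityFn, hMεmat ε, det3, quadform3]
    norm_num
  have hφ3 : ∀ x0 x1 x2 : ℝ, φ x0 * φ x1 * φ x2
      = (Real.sqrt (2*π))⁻¹^3 * Real.exp (-(x0^2+x1^2+x2^2)/2) := by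
    intro x0 x1 x2
    rw [hφ]
    simp only
    rw [show -(x0^2+x1^2+x2^2)/2 = (-x0^2/2) + ((-x1^2/2) + (-x2^2/2)) by ring,
      Real.exp_add, Real.exp_add]
    ring
  -- Fubini helpers
  have hprod : ∀ gv : Fin 3 → ℝ → ℝ,
      ∫ x : Fin 3 → ℝ, gv 0 (x 0) * gv 1 (x 1) * gv 2 (x 2)
        = (∫ t, gv 0 t) * (∫ t, gv 1 t) * (∫ t, gv 2 t) := by
    intro gv
    have h1 : ∀ x : Fin 3 → ℝ, gv 0 (x 0) * gv 1 (x 1) * gv 2 (x 2) = ∏ i, gv i (x i) := by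
      intro x; rw [Fin.prod_univ_three]
    calc ∫ x : Fin 3 → ℝ, gv 0 (x 0) * gv 1 (x 1) * gv 2 (x 2)
        = ∫ x : Fin 3 → ℝ, ∏ i, gv i (x i) := by simp_rw [h1]
      _ = ∏ i, ∫ t, gv i t := MeasureTheory.integral_fintype_prod_eq_prod (ι := Fin 3) gv
      _ = (∫ t, gv 0 t) * (∫ t, gv 1 t) * (∫ t, gv 2 t) :=
          Fin.prod_univ_three fun i => ∫ t, gv i t
  have hprod_int : ∀ gv : Fin 3 → ℝ → ℝ, (∀ i, Integrable (gv i)) →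
      Integrable (fun x : Fin 3 → ℝ => gv 0 (x 0) * gv 1 (x 1) * gv 2 (x 2)) := by
    intro gv hgv
    apply (Integrable.fintype_prod (f := gv) hgv).congr
    exact Filter.Eventually.of_forall fun x => Fin.prod_univ_three fun i => gv i (x i)
  have hprod3 : ∀ u v w : ℝ → ℝ,
      ∫ x : Fin 3 → ℝ, u (x 0) * v (x 1) * w (x 2)
        = (∫ t, u t) * (∫ t, v t) * (∫ t, w t) := by
    intro u v w
    simpa using hprod ![u, v, w]
  have hprod3_int : ∀ u v w : ℝ → ℝ, Integrable u → Integrable v → Integrable w →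
      Integrable (fun x : Fin 3 → ℝ => u (x 0) * v (x 1) * w (x 2)) := by
    intro u v w hu hv hw
    have h := hprod_int ![u, v, w] (by intro i; fin_cases i <;> simpa)
    simpa using h
  -- envelope
  have hEnvInt : Integrable (fun x : Fin 3 → ℝ => ψ (x 0) * ψ (x 1) * ψ (x 2)) :=
    hprod3_int ψ ψ ψ hψ_int hψ_int hψ_int
  have hEnvVal : ∫ x : Fin 3 → ℝ, ψ (x 0) * ψ (x 1) * ψ (x 2)
      = (∫ t, ψ t) * (∫ t, ψ t) * (∫ t, ψ t) := hprod3 ψ ψ ψ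
  -- main bound
  rw [Asymptotics.isBigO_iff]
  refine ⟨C * (Cg'*Cg'*Cg') * ((∫ t, ψ t) * (∫ t, ψ t) * (∫ t, ψ t)), ?_⟩
  filter_upwards [Metric.ball_mem_nhds (0:ℝ) hδ0] with ε hεb
  have hεδ : |ε| ≤ δ := by
    rw [Metric.mem_ball, Real.dist_eq, sub_zero] at hεb; exact hεb.le
  -- pointwise density estimate
  have hpt : ∀ x : Fin 3 → ℝ,
      |gaussianDensityFn (M ε) x - φ (x 0) * φ (x 1) * φ (x 2)
          * (1 + ε*((m 0 1)*(x 0*x 1) + (m 0 2)*(x 0*x 2) + (m 1 2)*(x 1*x 2)))|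
        ≤ ε^2 * C * (1+((x 0)^2+(x 1)^2+(x 2)^2))^2
          * Real.exp (-(3/8)*((x 0)^2+(x 1)^2+(x 2)^2)) := by
    intro x
    have hk := (hkey ε hεδ (x 0) (x 1) (x 2) _ _ _ _ rfl rfl rfl rfl).2
    rw [hdens ε x, hφ3 (x 0) (x 1) (x 2)]
    exact hk
  -- abbreviations
  obtain ⟨F, hF⟩ : ∃ F : (Fin 3 → ℝ) → ℝ,
      F = fun x => f 0 (x 0) * f 1 (x 1) * f 2 (x 2) := ⟨_, rfl⟩
  obtain ⟨G1, hG1⟩ : ∃ G1 : (Fin 3 → ℝ) → ℝ,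
      G1 = fun x => φ (x 0) * φ (x 1) * φ (x 2)
        * (1 + ε*((m 0 1)*(x 0*x 1) + (m 0 2)*(x 0*x 2) + (m 1 2)*(x 1*x 2))) := ⟨_, rfl⟩
  obtain ⟨dens, hdensdef⟩ : ∃ dens : (Fin 3 → ℝ) → ℝ,
      dens = gaussianDensityFn (M ε) := ⟨_, rfl⟩
  -- measurability
  have hFmeas : Measurable F := by
    rw [hF]
    exact (((hmeas 0).comp (measurable_pi_apply 0)).mul
      ((hmeas 1).comp (measurable_pi_apply 1))).mul ((hmeas 2).comp (measurable_pi_apply 2))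
  have hG1meas : Measurable G1 := by
    rw [hG1]
    have hφm : ∀ i : Fin 3, Measurable fun x : Fin 3 → ℝ => φ (x i) := fun i =>
      hφ_cont.measurable.comp (measurable_pi_apply i)
    have hqm : Measurable fun x : Fin 3 → ℝ =>
        (m 0 1)*(x 0*x 1) + (m 0 2)*(x 0*x 2) + (m 1 2)*(x 1*x 2) := by
      apply Measurable.add
      apply Measurable.add
      · exact ((measurable_pi_apply 0).mul (measurable_pi_apply 1)).const_mul _
      · exact ((measurable_pi_apply 0).mul (measurable_pi_apply 2)).const_mul _
      · exact ((measurable_pi_apply 1).mul (measurable_pi_apply 2)).const_mul _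
    exact (((hφm 0).mul (hφm 1)).mul (hφm 2)).mul
      (measurable_const.add (hqm.const_mul ε))
  have hdens_meas : Measurable dens := by rw [hdensdef]; exact measurable_gdf (M ε)
  -- pointwise estimate with envelope
  have hptF : ∀ x : Fin 3 → ℝ, ‖F x * (dens x - G1 x)‖
      ≤ ε^2 * (C * (Cg'*Cg'*Cg')) * (ψ (x 0) * ψ (x 1) * ψ (x 2)) := by
    intro x
    rw [Real.norm_eq_abs, abs_mul]
    have h1 : |dens x - G1 x| ≤ ε^2 * C * (1+((x 0)^2+(x 1)^2+(x 2)^2))^2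
        * Real.exp (-(3/8)*((x 0)^2+(x 1)^2+(x 2)^2)) := by
      rw [hdensdef, hG1]; exact hpt x
    have hF0 : |F x| ≤ (Cg'*(1+(x 0)^2)^2) * (Cg'*(1+(x 1)^2)^2) * (Cg'*(1+(x 2)^2)^2) := by
      rw [hF]
      simp only
      rw [abs_mul, abs_mul]
      exact mul_le_mul (mul_le_mul (hfb 0 _) (hfb 1 _) (abs_nonneg _) (by positivity))
        (hfb 2 _) (abs_nonneg _) (by positivity)
    have hsx : (1+((x 0)^2+(x 1)^2+(x 2)^2))^2
        ≤ ((1+(x 0)^2)*(1+(x 1)^2)*(1+(x 2)^2))^2 :=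
      pow_le_pow_left₀ (by positivity) (one_add_sum_le _ _ _) 2
    have hexp3 : Real.exp (-(3/8)*((x 0)^2+(x 1)^2+(x 2)^2))
        = Real.exp (-(3/8)*(x 0)^2) * Real.exp (-(3/8)*(x 1)^2)
          * Real.exp (-(3/8)*(x 2)^2) := by
      rw [← Real.exp_add, ← Real.exp_add]; congr 1; ring
    calc |F x| * |dens x - G1 x|
        ≤ ((Cg'*(1+(x 0)^2)^2) * (Cg'*(1+(x 1)^2)^2) * (Cg'*(1+(x 2)^2)^2))
          * (ε^2 * C * (1+((x 0)^2+(x 1)^2+(x 2)^2))^2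
            * Real.exp (-(3/8)*((x 0)^2+(x 1)^2+(x 2)^2))) :=
          mul_le_mul hF0 h1 (abs_nonneg _) (by positivity)
      _ ≤ ((Cg'*(1+(x 0)^2)^2) * (Cg'*(1+(x 1)^2)^2) * (Cg'*(1+(x 2)^2)^2))
          * (ε^2 * C * ((1+(x 0)^2)*(1+(x 1)^2)*(1+(x 2)^2))^2
            * Real.exp (-(3/8)*((x 0)^2+(x 1)^2+(x 2)^2))) := by
          apply mul_le_mul_of_nonneg_left _ (by positivity)
          apply mul_le_mul_of_nonneg_right _ (Real.exp_pos _).le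
          exact mul_le_mul_of_nonneg_left hsx (by positivity)
      _ = ε^2 * (C * (Cg'*Cg'*Cg')) * (ψ (x 0) * ψ (x 1) * ψ (x 2)) := by
          rw [hexp3, hψ]; ring
  -- integrable pieces
  have hT0int : Integrable (fun x : Fin 3 → ℝ => g0 0 (x 0) * g0 1 (x 1) * g0 2 (x 2)) :=
    hprod3_int _ _ _ (hg0_int 0) (hg0_int 1) (hg0_int 2)
  have hT1int : Integrable (fun x : Fin 3 → ℝ => g1 0 (x 0) * g1 1 (x 1) * g0 2 (x 2)) :=
    hprod3_int _ _ _ (hg1_int 0) (hg1_int 1) (hg0_int 2)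
  have hT2int : Integrable (fun x : Fin 3 → ℝ => g1 0 (x 0) * g0 1 (x 1) * g1 2 (x 2)) :=
    hprod3_int _ _ _ (hg1_int 0) (hg0_int 1) (hg1_int 2)
  have hT3int : Integrable (fun x : Fin 3 → ℝ => g0 0 (x 0) * g1 1 (x 1) * g1 2 (x 2)) :=
    hprod3_int _ _ _ (hg0_int 0) (hg1_int 1) (hg1_int 2)
  have hdecomp : (fun x : Fin 3 → ℝ => F x * G1 x)
      = fun x : Fin 3 → ℝ => (g0 0 (x 0) * g0 1 (x 1) * g0 2 (x 2))
        + ((ε*(m 0 1)) * (g1 0 (x 0) * g1 1 (x 1) * g0 2 (x 2))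
        + ((ε*(m 0 2)) * (g1 0 (x 0) * g0 1 (x 1) * g1 2 (x 2))
        + (ε*(m 1 2)) * (g0 0 (x 0) * g1 1 (x 1) * g1 2 (x 2)))) := by
    funext x
    rw [hF, hG1, hg0, hg1]
    simp only
    ring
  have h23 : Integrable (fun x : Fin 3 → ℝ =>
      (ε*(m 0 2)) * (g1 0 (x 0) * g0 1 (x 1) * g1 2 (x 2))
      + (ε*(m 1 2)) * (g0 0 (x 0) * g1 1 (x 1) * g1 2 (x 2))) :=
    (hT2int.const_mul _).add (hT3int.const_mul _)
  have h123 : Integrable (fun x : Fin 3 → ℝ =>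
      (ε*(m 0 1)) * (g1 0 (x 0) * g1 1 (x 1) * g0 2 (x 2))
      + ((ε*(m 0 2)) * (g1 0 (x 0) * g0 1 (x 1) * g1 2 (x 2))
      + (ε*(m 1 2)) * (g0 0 (x 0) * g1 1 (x 1) * g1 2 (x 2)))) :=
    (hT1int.const_mul _).add h23
  have hFG1int : Integrable (fun x : Fin 3 → ℝ => F x * G1 x) := by
    rw [hdecomp]
    exact hT0int.add h123
  have hdiffint : Integrable (fun x : Fin 3 → ℝ => F x * (dens x - G1 x)) := by
    apply Integrable.mono' (hEnvInt.const_mul (ε^2 * (C * (Cg'*Cg'*Cg'))))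
    · exact (hFmeas.mul (hdens_meas.sub hG1meas)).aestronglyMeasurable
    · exact Filter.Eventually.of_forall hptF
  have hFdens_int : Integrable (fun x : Fin 3 → ℝ => dens x * F x) := by
    have heq : (fun x : Fin 3 → ℝ => dens x * F x)
        = fun x => F x * G1 x + F x * (dens x - G1 x) := by
      funext x; ring
    rw [heq]
    exact hFG1int.add hdiffint
  -- withDensity conversion
  have hdens_nonneg : ∀ x, 0 ≤ dens x := by
    intro x
    rw [hdensdef]
    unfold gaussianDensityFn
    positivity
  have hconv : (∫ z : Fin 3 → ℝ, f 0 (z 0) * f 1 (z 1) * f 2 (z 2) ∂ gaussianMeasure (M ε))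
      = ∫ z : Fin 3 → ℝ, dens z * F z := by
    rw [gaussianMeasure]
    have hrfl : (fun x : Fin 3 → ℝ => ENNReal.ofReal (gaussianDensityFn (M ε) x))
        = fun x => ((fun y => (gaussianDensityFn (M ε) y).toNNReal) x : ℝ≥0∞) := rfl
    rw [hrfl, integral_withDensity_eq_integral_smul
      ((measurable_gdf (M ε)).real_toNNReal) _]
    congr 1
    funext z
    rw [NNReal.smul_def, Real.coe_toNNReal _ (by
      have := hdens_nonneg z; rwa [hdensdef] at this), smul_eq_mul, ← hdensdef, hF]
  -- integral values
  have hIT0 : ∫ x : Fin 3 → ℝ, g0 0 (x 0) * g0 1 (x 1) * g0 2 (x 2) = a 0 * a 1 * a 2 := by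
    rw [hprod3, hg0_val 0, hg0_val 1, hg0_val 2]
  have hIT1 : ∫ x : Fin 3 → ℝ, g1 0 (x 0) * g1 1 (x 1) * g0 2 (x 2) = b 0 * b 1 * a 2 := by
    rw [hprod3, hg1_val 0, hg1_val 1, hg0_val 2]
  have hIT2 : ∫ x : Fin 3 → ℝ, g1 0 (x 0) * g0 1 (x 1) * g1 2 (x 2) = b 0 * a 1 * b 2 := by
    rw [hprod3, hg1_val 0, hg0_val 1, hg1_val 2]
  have hIT3 : ∫ x : Fin 3 → ℝ, g0 0 (x 0) * g1 1 (x 1) * g1 2 (x 2) = a 0 * b 1 * b 2 := by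
    rw [hprod3, hg0_val 0, hg1_val 1, hg1_val 2]
  have hIFG1 : ∫ x : Fin 3 → ℝ, F x * G1 x
      = a 0 * a 1 * a 2 + (ε*(m 0 1)) * (b 0 * b 1 * a 2)
        + (ε*(m 0 2)) * (b 0 * a 1 * b 2) + (ε*(m 1 2)) * (a 0 * b 1 * b 2) := by
    calc ∫ x : Fin 3 → ℝ, F x * G1 x
        = ∫ x : Fin 3 → ℝ, ((g0 0 (x 0) * g0 1 (x 1) * g0 2 (x 2))
          + ((ε*(m 0 1)) * (g1 0 (x 0) * g1 1 (x 1) * g0 2 (x 2))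
          + ((ε*(m 0 2)) * (g1 0 (x 0) * g0 1 (x 1) * g1 2 (x 2))
          + (ε*(m 1 2)) * (g0 0 (x 0) * g1 1 (x 1) * g1 2 (x 2))))) := by rw [hdecomp]
      _ = a 0 * a 1 * a 2 + ((ε*(m 0 1)) * (b 0 * b 1 * a 2)
          + ((ε*(m 0 2)) * (b 0 * a 1 * b 2) + (ε*(m 1 2)) * (a 0 * b 1 * b 2))) := by
          rw [integral_add hT0int h123,
            integral_add (hT1int.const_mul _) h23,
            integral_add (hT2int.const_mul _) (hT3int.const_mul _),
            integral_const_mul, integral_const_mul, integral_const_mul,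
            hIT0, hIT1, hIT2, hIT3]
      _ = a 0 * a 1 * a 2 + (ε*(m 0 1)) * (b 0 * b 1 * a 2)
          + (ε*(m 0 2)) * (b 0 * a 1 * b 2) + (ε*(m 1 2)) * (a 0 * b 1 * b 2) := by ring
  have hsplitint : ∫ z : Fin 3 → ℝ, dens z * F z
      = (∫ z : Fin 3 → ℝ, F z * G1 z) + ∫ z : Fin 3 → ℝ, F z * (dens z - G1 z) := by
    rw [← integral_add hFG1int hdiffint]
    congr 1
    funext z
    ring
  -- final estimate
  have hrem : ‖∫ z : Fin 3 → ℝ, F z * (dens z - G1 z)‖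
      ≤ ε^2 * (C * (Cg'*Cg'*Cg')) * ((∫ t, ψ t) * (∫ t, ψ t) * (∫ t, ψ t)) := by
    calc ‖∫ z : Fin 3 → ℝ, F z * (dens z - G1 z)‖
        ≤ ∫ z : Fin 3 → ℝ, ε^2 * (C * (Cg'*Cg'*Cg')) * (ψ (z 0) * ψ (z 1) * ψ (z 2)) :=
          norm_integral_le_of_norm_le (hEnvInt.const_mul _)
            (Filter.Eventually.of_forall hptF)
      _ = ε^2 * (C * (Cg'*Cg'*Cg')) * ((∫ t, ψ t) * (∫ t, ψ t) * (∫ t, ψ t)) := by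
          rw [integral_const_mul, hEnvVal]
  rw [hconv, hsplitint, hIFG1]
  have hnorm2 : ‖ε^2‖ = ε^2 := by
    rw [Real.norm_eq_abs, abs_of_nonneg (sq_nonneg ε)]
  rw [hnorm2]
  have hgoal_eq : a 0 * a 1 * a 2 + ε * m 0 1 * (b 0 * b 1 * a 2)
      + ε * m 0 2 * (b 0 * a 1 * b 2) + ε * m 1 2 * (a 0 * b 1 * b 2)
      + (∫ z : Fin 3 → ℝ, F z * (dens z - G1 z))
      - a 0 * a 1 * a 2
      - ε * (a 0 * m 1 2 * b 1 * b 2 + a 1 * m 0 2 * b 0 * b 2 + a 2 * m 0 1 * b 0 * b 1)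
      = ∫ z : Fin 3 → ℝ, F z * (dens z - G1 z) := by ring
  calc ‖a 0 * a 1 * a 2 + ε * m 0 1 * (b 0 * b 1 * a 2)
      + ε * m 0 2 * (b 0 * a 1 * b 2) + ε * m 1 2 * (a 0 * b 1 * b 2)
      + (∫ z : Fin 3 → ℝ, F z * (dens z - G1 z))
      - a 0 * a 1 * a 2
      - ε * (a 0 * m 1 2 * b 1 * b 2 + a 1 * m 0 2 * b 0 * b 2 + a 2 * m 0 1 * b 0 * b 1)‖
      = ‖∫ z : Fin 3 → ℝ, F z * (dens z - G1 z)‖ := by rw [hgoal_eq]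
    _ ≤ ε^2 * (C * (Cg'*Cg'*Cg')) * ((∫ t, ψ t) * (∫ t, ψ t) * (∫ t, ψ t)) := hrem
    _ = C * (Cg'*Cg'*Cg') * ((∫ t, ψ t) * (∫ t, ψ t) * (∫ t, ψ t)) * ε^2 := by ring
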